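/- arXiv:2003.06157 — 2 statements merged into one kernel-verified Lean document; each statement's English description precedes it below -/
import Mathlib

section
/- Let X be a measurable space, let μ and ν be finite measures on X, let p > 0, and let u, v : X → ℝ be measurable functions with u ≤ 0 and v ≤ 0. Assume that for every s > 0 one has ν({x ∈ X : u(x) < v(x) − s}) ≤ μ({x ∈ X : u(x) < −s}). Then ∫_X (−u)^p dν ≤ 2^p ∫_X (−u)^p dμ + 2^p ∫_X (−v)^p dν. -/
open MeasureTheory Set ENNReal

/-- Measure-theoretic core of Lemma 3.2: if `ν({u < v - s}) ≤ μ({u < -s})` for all `s > 0`,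
then `∫ (-u)^p dν ≤ 2^p ∫ (-u)^p dμ + 2^p ∫ (-v)^p dν`. -/
theorem stmt1 {X : Type*} [MeasurableSpace X] (μ ν : Measure X)
    [IsFiniteMeasure μ] [IsFiniteMeasure ν] (p : ℝ) (hp : 0 < p)
    (u v : X → ℝ) (hu : Measurable u) (hv : Measurable v)
    (hu0 : ∀ x, u x ≤ 0) (hv0 : ∀ x, v x ≤ 0)
    (hcomp : ∀ s : ℝ, 0 < s → ν {x | u x < v x - s} ≤ μ {x | u x < -s}) :
    ∫⁻ x, ENNReal.ofReal ((-u x) ^ p) ∂ν ≤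
      (2 : ℝ≥0∞) ^ p * ∫⁻ x, ENNReal.ofReal ((-u x) ^ p) ∂μ +
        (2 : ℝ≥0∞) ^ p * ∫⁻ x, ENNReal.ofReal ((-v x) ^ p) ∂ν := by
  set f : X → ℝ := fun x => max (v x - u x) 0 with hf_def
  have hf : Measurable f := (hv.sub hu).max measurable_const
  have hf0 : ∀ x, 0 ≤ f x := fun x => le_max_right _ _
  -- Layer cake: ∫ f^p dν ≤ ∫ (-u)^p dμ
  have key : ∫⁻ x, ENNReal.ofReal (f x ^ p) ∂ν ≤ ∫⁻ x, ENNReal.ofReal ((-u x) ^ p) ∂μ := by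
    rw [lintegral_rpow_eq_lintegral_meas_lt_mul ν (Filter.Eventually.of_forall hf0)
        hf.aemeasurable hp,
      lintegral_rpow_eq_lintegral_meas_lt_mul μ
        (Filter.Eventually.of_forall fun x => neg_nonneg.mpr (hu0 x))
        hu.neg.aemeasurable hp]
    refine mul_le_mul_right (setLIntegral_mono' measurableSet_Ioi fun t ht => ?_) _
    refine mul_le_mul_left ?_ _
    have h1 : {a : X | t < f a} = {x | u x < v x - t} := by
      ext a
      simp only [mem_setOf_eq, hf_def, lt_max_iff]
      constructor
      · rintro (h | h)
        · linarith
        · exact absurd h (not_lt.mpr (le_of_lt ht))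
      · intro h; left; linarith
    have h2 : {a : X | t < -u a} = {x | u x < -t} := by
      ext a; simp only [mem_setOf_eq, lt_neg]
    rw [h1, h2]
    exact hcomp t ht
  -- Pointwise bound: (-u)^p ≤ 2^p f^p + 2^p (-v)^p
  have ptwise : ∀ x, ENNReal.ofReal ((-u x) ^ p) ≤
      (2 : ℝ≥0∞) ^ p * ENNReal.ofReal (f x ^ p) +
        (2 : ℝ≥0∞) ^ p * ENNReal.ofReal ((-v x) ^ p) := by
    intro x
    have hvx : (0 : ℝ) ≤ -v x := neg_nonneg.mpr (hv0 x)
    have hsum : -u x ≤ f x + (-v x) := by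
      have : v x - u x ≤ f x := le_max_left _ _
      linarith
    have hux : (0 : ℝ) ≤ -u x := neg_nonneg.mpr (hu0 x)
    have h2max : -u x ≤ 2 * max (f x) (-v x) := by
      calc -u x ≤ f x + (-v x) := hsum
        _ ≤ max (f x) (-v x) + max (f x) (-v x) := by
            gcongr
            exacts [le_max_left _ _, le_max_right _ _]
        _ = 2 * max (f x) (-v x) := (two_mul _).symm
    have hmax0 : (0 : ℝ) ≤ max (f x) (-v x) := le_trans (hf0 x) (le_max_left _ _)
    have hrp : (-u x) ^ p ≤ 2 ^ p * (f x ^ p + (-v x) ^ p) := by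
      calc (-u x) ^ p ≤ (2 * max (f x) (-v x)) ^ p :=
            Real.rpow_le_rpow hux h2max hp.le
        _ = 2 ^ p * max (f x) (-v x) ^ p := Real.mul_rpow (by norm_num) hmax0
        _ ≤ 2 ^ p * (f x ^ p + (-v x) ^ p) := by
            gcongr
            rcases max_cases (f x) (-v x) with ⟨h, _⟩ | ⟨h, _⟩ <;> rw [h]
            · nlinarith [Real.rpow_nonneg hvx p]
            · nlinarith [Real.rpow_nonneg (hf0 x) p]
    calc ENNReal.ofReal ((-u x) ^ p) ≤ ENNReal.ofReal (2 ^ p * (f x ^ p + (-v x) ^ p)) :=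
          ENNReal.ofReal_le_ofReal hrp
      _ = (2 : ℝ≥0∞) ^ p * ENNReal.ofReal (f x ^ p) + (2 : ℝ≥0∞) ^ p *
            ENNReal.ofReal ((-v x) ^ p) := by
          rw [ENNReal.ofReal_mul (Real.rpow_nonneg (by norm_num) p),
            ENNReal.ofReal_add (Real.rpow_nonneg (hf0 x) p) (Real.rpow_nonneg hvx p),
            mul_add, ← ENNReal.ofReal_rpow_of_pos (by norm_num : (0:ℝ) < 2),
            ENNReal.ofReal_ofNat]
  calc ∫⁻ x, ENNReal.ofReal ((-u x) ^ p) ∂ν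
      ≤ ∫⁻ x, ((2 : ℝ≥0∞) ^ p * ENNReal.ofReal (f x ^ p) +
          (2 : ℝ≥0∞) ^ p * ENNReal.ofReal ((-v x) ^ p)) ∂ν := lintegral_mono ptwise
    _ = (2 : ℝ≥0∞) ^ p * ∫⁻ x, ENNReal.ofReal (f x ^ p) ∂ν +
          (2 : ℝ≥0∞) ^ p * ∫⁻ x, ENNReal.ofReal ((-v x) ^ p) ∂ν := by
        rw [lintegral_add_left (((hf.pow measurable_const).ennreal_ofReal).const_mul _),
          lintegral_const_mul _ ((hf.pow measurable_const).ennreal_ofReal),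
          lintegral_const_mul _ (f := fun x => ENNReal.ofReal ((-v x) ^ p))
            (((hv.neg.pow measurable_const)).ennreal_ofReal)]
    _ ≤ (2 : ℝ≥0∞) ^ p * ∫⁻ x, ENNReal.ofReal ((-u x) ^ p) ∂μ +
          (2 : ℝ≥0∞) ^ p * ∫⁻ x, ENNReal.ofReal ((-v x) ^ p) ∂ν := by
        gcongr
end

section
/- Let p, α, q, Q be real numbers with p ≥ 1, α > 1 and 1 < q < Q < p·α. Then there exists a constant C > 0, depending only on p, q, Q, α, with the following property: for every measurable space X with a probability measure μ, every measurable function u : X → ℝ with u ≤ −1, and all real constants E ≥ 1 and M > 0 such that ∫_X (−u) dμ ≤ M and μ({x ∈ X : u(x) < −t}) ≤ E^α·(t−1)^{−pα} for all t ≥ 2, one has ∫_X (−u)^q dμ ≤ C · E^{α(q−1)/(Q−1)} · M^{(Q−q)/(Q−1)}. -/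
open MeasureTheory Set ENNReal

private lemma tb6 {q β Q' b : ℝ} (hq : 0 ≤ q) (hβ : 0 < β) (hQβ : Q' ≤ β) (hb : 2 ≤ b) :
    (2 * b) ^ q * (b - 1) ^ (-β) ≤ 2 ^ (q + β) * b ^ (q - Q') := by
  have hb0 : (0:ℝ) < b := by linarith
  have hb1 : (1:ℝ) ≤ b := by linarith
  have h1 : (b - 1) ^ (-β) ≤ (b / 2) ^ (-β) :=
    Real.rpow_le_rpow_of_nonpos (by linarith) (by linarith) (by linarith)
  have h2 : (b / 2) ^ (-β) = 2 ^ β * b ^ (-β) := by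
    rw [Real.div_rpow hb0.le (by norm_num), Real.rpow_neg (by norm_num : (0:ℝ) ≤ 2),
      div_inv_eq_mul]
    exact mul_comm _ _
  have h3 : (2 * b) ^ q = 2 ^ q * b ^ q := Real.mul_rpow (by norm_num) hb0.le
  have h4 : (0:ℝ) ≤ (2 * b) ^ q := Real.rpow_nonneg (by linarith) q
  calc (2 * b) ^ q * (b - 1) ^ (-β) ≤ (2 * b) ^ q * (2 ^ β * b ^ (-β)) :=
        mul_le_mul_of_nonneg_left (h1.trans_eq h2) h4
    _ = 2 ^ (q + β) * (b ^ q * b ^ (-β)) := by rw [h3, Real.rpow_add two_pos]; ring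
    _ = 2 ^ (q + β) * b ^ (q - β) := by rw [← Real.rpow_add hb0]; ring_nf
    _ ≤ 2 ^ (q + β) * b ^ (q - Q') :=
        mul_le_mul_of_nonneg_left (Real.rpow_le_rpow_of_exponent_le hb1 (by linarith))
          (Real.rpow_nonneg (by norm_num) _)

private lemma tail6 {X : Type} [MeasurableSpace X] (μ : Measure X) (u : X → ℝ)
    (hu : Measurable u) (hu1 : ∀ x, u x ≤ -1) {q Q β Eα T r : ℝ}
    (hq1 : 1 < q) (hqQ : q < Q) (hQβ : Q ≤ β) (hβ : 0 < β) (hEα : 0 ≤ Eα)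
    (hT : 2 ≤ T) (hr : r = (2:ℝ) ^ (q - Q))
    (htail : ∀ t : ℝ, 2 ≤ t → μ {x | u x < -t} ≤ ENNReal.ofReal (Eα * (t - 1) ^ (-β))) :
    ∫⁻ x in {x | u x < -T}, ENNReal.ofReal ((-u x) ^ q) ∂μ ≤
      ENNReal.ofReal (2 ^ (q + β) * (Eα * T ^ (q - Q)) / (1 - r)) := by
  have hT0 : (0:ℝ) < T := by linarith
  have hr0 : 0 < r := hr ▸ Real.rpow_pos_of_pos two_pos _
  have hr1 : r < 1 := hr ▸ Real.rpow_lt_one_of_one_lt_of_neg one_lt_two (by linarith)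
  set c : ℝ := 2 ^ (q + β) * (Eα * T ^ (q - Q)) with hcdef
  have hc0 : 0 ≤ c := by
    have : (0:ℝ) ≤ T ^ (q - Q) := (Real.rpow_pos_of_pos hT0 _).le
    have : (0:ℝ) < (2:ℝ) ^ (q + β) := Real.rpow_pos_of_pos two_pos _
    positivity
  set s : ℕ → Set X := fun k => {x | u x < -((2:ℝ) ^ k * T)} with hsdef
  have hsm : ∀ k, MeasurableSet (s k) := fun k => measurableSet_lt hu measurable_const
  have hbk : ∀ k : ℕ, (2:ℝ) ≤ (2:ℝ) ^ k * T := by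
    intro k
    have h1 : (1:ℝ) ≤ (2:ℝ) ^ k := one_le_pow₀ (by norm_num)
    nlinarith
  have hcover : {x | u x < -T} ⊆ ⋃ k, s k \ s (k + 1) := by
    intro x hx
    have hex : ∃ n, x ∉ s n := by
      obtain ⟨n, hn⟩ := pow_unbounded_of_one_lt (-u x) (one_lt_two (α := ℝ))
      refine ⟨n, ?_⟩
      simp only [hsdef, mem_setOf_eq, not_lt]
      have h2n : (0:ℝ) < (2:ℝ) ^ n := pow_pos two_pos n
      nlinarith
    classical
    have h0 : x ∈ s 0 := by
      simp only [hsdef, mem_setOf_eq, pow_zero, one_mul]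
      exact hx
    have hn : x ∉ s (Nat.find hex) := Nat.find_spec hex
    have hpos : Nat.find hex ≠ 0 := by
      intro h
      rw [h] at hn
      exact hn h0
    obtain ⟨k, hk⟩ : ∃ k, Nat.find hex = k + 1 := Nat.exists_eq_succ_of_ne_zero hpos
    have hxk : x ∈ s k := by
      by_contra hc
      exact absurd hc (Nat.find_min hex (by omega))
    rw [hk] at hn
    exact mem_iUnion.2 ⟨k, hxk, hn⟩
  have termb : ∀ k : ℕ, ∫⁻ x in s k \ s (k + 1), ENNReal.ofReal ((-u x) ^ q) ∂μ ≤
      ENNReal.ofReal (c * r ^ k) := by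
    intro k
    have hb2 : (2:ℝ) ≤ (2:ℝ) ^ k * T := hbk k
    have hb0 : (0:ℝ) < (2:ℝ) ^ k * T := by linarith
    have step1 : ∫⁻ x in s k \ s (k + 1), ENNReal.ofReal ((-u x) ^ q) ∂μ ≤
        ENNReal.ofReal ((2 * ((2:ℝ) ^ k * T)) ^ q) * μ (s k \ s (k + 1)) := by
      have := setLIntegral_const (μ := μ) (s k \ s (k + 1))
        (ENNReal.ofReal ((2 * ((2:ℝ) ^ k * T)) ^ q))
      rw [← this]
      refine setLIntegral_mono' ((hsm k).diff (hsm (k + 1))) ?_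
      intro x hx
      obtain ⟨_, hx2⟩ := hx
      have hx2' : -((2:ℝ) ^ (k + 1) * T) ≤ u x := by
        simp only [hsdef, mem_setOf_eq, not_lt] at hx2
        exact hx2
      have h2 : -u x ≤ 2 * ((2:ℝ) ^ k * T) := by
        have he : (2:ℝ) ^ (k + 1) * T = 2 * ((2:ℝ) ^ k * T) := by ring
        rw [he] at hx2'
        linarith
      exact ENNReal.ofReal_le_ofReal
        (Real.rpow_le_rpow (by have := hu1 x; linarith) h2 (by linarith))
    have step2 : μ (s k \ s (k + 1)) ≤
        ENNReal.ofReal (Eα * ((2:ℝ) ^ k * T - 1) ^ (-β)) :=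
      (measure_mono diff_subset).trans (htail ((2:ℝ) ^ k * T) hb2)
    calc ∫⁻ x in s k \ s (k + 1), ENNReal.ofReal ((-u x) ^ q) ∂μ
        ≤ ENNReal.ofReal ((2 * ((2:ℝ) ^ k * T)) ^ q) *
            ENNReal.ofReal (Eα * ((2:ℝ) ^ k * T - 1) ^ (-β)) :=
          step1.trans (mul_le_mul_right step2 _)
      _ = ENNReal.ofReal ((2 * ((2:ℝ) ^ k * T)) ^ q * (Eα * ((2:ℝ) ^ k * T - 1) ^ (-β))) :=
          (ENNReal.ofReal_mul (Real.rpow_nonneg (by linarith) q)).symm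
      _ ≤ ENNReal.ofReal (c * r ^ k) := by
          refine ENNReal.ofReal_le_ofReal ?_
          have e1 : ((2:ℝ) ^ k * T) ^ (q - Q) = r ^ k * T ^ (q - Q) := by
            rw [Real.mul_rpow (by positivity) hT0.le]
            congr 1
            rw [← Real.rpow_natCast (2:ℝ) k, ← Real.rpow_mul (by norm_num),
              mul_comm (k:ℝ) (q - Q), Real.rpow_mul (by norm_num), Real.rpow_natCast, hr]
          calc (2 * ((2:ℝ) ^ k * T)) ^ q * (Eα * ((2:ℝ) ^ k * T - 1) ^ (-β))
              = Eα * ((2 * ((2:ℝ) ^ k * T)) ^ q * ((2:ℝ) ^ k * T - 1) ^ (-β)) := by ring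
            _ ≤ Eα * (2 ^ (q + β) * ((2:ℝ) ^ k * T) ^ (q - Q)) :=
                mul_le_mul_of_nonneg_left (tb6 (by linarith) hβ hQβ hb2) hEα
            _ = c * r ^ k := by rw [e1, hcdef]; ring
  calc ∫⁻ x in {x | u x < -T}, ENNReal.ofReal ((-u x) ^ q) ∂μ
      ≤ ∫⁻ x in ⋃ k, s k \ s (k + 1), ENNReal.ofReal ((-u x) ^ q) ∂μ :=
        lintegral_mono_set hcover
    _ ≤ ∑' k, ∫⁻ x in s k \ s (k + 1), ENNReal.ofReal ((-u x) ^ q) ∂μ :=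
        lintegral_iUnion_le _ _
    _ ≤ ∑' k, ENNReal.ofReal (c * r ^ k) := ENNReal.tsum_le_tsum termb
    _ = ENNReal.ofReal (∑' k, c * r ^ k) :=
        (ENNReal.ofReal_tsum_of_nonneg (fun k => by positivity)
          ((summable_geometric_of_lt_one hr0.le hr1).mul_left c)).symm
    _ = ENNReal.ofReal (c / (1 - r)) := by
        rw [tsum_mul_left, tsum_geometric_of_lt_one hr0.le hr1, div_eq_mul_inv]

private lemma bulk6 {X : Type} [MeasurableSpace X] (μ : Measure X) (u : X → ℝ)
    (hu : Measurable u) (hu1 : ∀ x, u x ≤ -1) {q T M : ℝ} (hq1 : 1 < q) (hT : 0 < T)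
    (hint : ∫⁻ x, ENNReal.ofReal (-u x) ∂μ ≤ ENNReal.ofReal M) :
    ∫⁻ x in {x | u x < -T}ᶜ, ENNReal.ofReal ((-u x) ^ q) ∂μ ≤
      ENNReal.ofReal (T ^ (q - 1) * M) := by
  have hTq : (0:ℝ) ≤ T ^ (q - 1) := (Real.rpow_pos_of_pos hT _).le
  have hms : MeasurableSet {x | u x < -T} := measurableSet_lt hu measurable_const
  have hmf : Measurable fun x => ENNReal.ofReal (-u x) :=
    ENNReal.measurable_ofReal.comp hu.neg
  calc ∫⁻ x in {x | u x < -T}ᶜ, ENNReal.ofReal ((-u x) ^ q) ∂μ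
      ≤ ∫⁻ x in {x | u x < -T}ᶜ, ENNReal.ofReal (T ^ (q - 1)) * ENNReal.ofReal (-u x) ∂μ := by
        refine setLIntegral_mono' hms.compl ?_
        intro x hx
        have hx' : -u x ≤ T := by
          simp only [mem_compl_iff, mem_setOf_eq, not_lt] at hx
          linarith
        have h1 : (1:ℝ) ≤ -u x := by have := hu1 x; linarith
        rw [← ENNReal.ofReal_mul hTq]
        refine ENNReal.ofReal_le_ofReal ?_
        have e1 : (-u x) ^ q = (-u x) ^ (q - 1) * (-u x) := by
          have h := Real.rpow_add_one (by linarith : -u x ≠ 0) (q - 1)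
          rw [show q - 1 + 1 = q from by ring] at h
          exact h
        rw [e1]
        exact mul_le_mul_of_nonneg_right
          (Real.rpow_le_rpow (by linarith) hx' (by linarith)) (by linarith)
    _ = ENNReal.ofReal (T ^ (q - 1)) * ∫⁻ x in {x | u x < -T}ᶜ, ENNReal.ofReal (-u x) ∂μ :=
        lintegral_const_mul _ hmf
    _ ≤ ENNReal.ofReal (T ^ (q - 1)) * ENNReal.ofReal M :=
        mul_le_mul_right ((setLIntegral_le_lintegral _ _).trans hint) _
    _ = ENNReal.ofReal (T ^ (q - 1) * M) := (ENNReal.ofReal_mul hTq).symm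

private lemma bulk6' {X : Type} [MeasurableSpace X] (μ : Measure X) [IsProbabilityMeasure μ]
    (u : X → ℝ) (hu : Measurable u) (hu1 : ∀ x, u x ≤ -1) {q T : ℝ} (hq0 : 0 ≤ q) (hT : 0 < T) :
    ∫⁻ x in {x | u x < -T}ᶜ, ENNReal.ofReal ((-u x) ^ q) ∂μ ≤
      ENNReal.ofReal (T ^ q) := by
  have hms : MeasurableSet {x | u x < -T} := measurableSet_lt hu measurable_const
  calc ∫⁻ x in {x | u x < -T}ᶜ, ENNReal.ofReal ((-u x) ^ q) ∂μ
      ≤ ∫⁻ _ in {x | u x < -T}ᶜ, ENNReal.ofReal (T ^ q) ∂μ := by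
        refine setLIntegral_mono' hms.compl ?_
        intro x hx
        have hx' : -u x ≤ T := by
          simp only [mem_compl_iff, mem_setOf_eq, not_lt] at hx
          linarith
        have h1 : (0:ℝ) ≤ -u x := by have := hu1 x; linarith
        exact ENNReal.ofReal_le_ofReal (Real.rpow_le_rpow h1 hx' hq0)
    _ = ENNReal.ofReal (T ^ q) * μ {x | u x < -T}ᶜ := setLIntegral_const _ _
    _ ≤ ENNReal.ofReal (T ^ q) * 1 := mul_le_mul_right prob_le_one _
    _ = ENNReal.ofReal (T ^ q) := mul_one _

set_option maxHeartbeats 1000000 in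
/-- Quantitative analytic core of Theorem 4.6: if `u ≤ -1`, `∫(-u) dμ ≤ M`, and
`μ({u < -t}) ≤ E^α (t-1)^{-pα}` for `t ≥ 2`, then
`∫(-u)^q dμ ≤ C E^{α(q-1)/(Q-1)} M^{(Q-q)/(Q-1)}` with `C` depending only on `p, q, Q, α`. -/
theorem stmt6 (p α q Q : ℝ) (hp : 1 ≤ p) (hα : 1 < α) (hq : 1 < q) (hqQ : q < Q)
    (hQ : Q < p * α) :
    ∃ C : ℝ, 0 < C ∧
      ∀ (X : Type) (_ : MeasurableSpace X) (μ : Measure X), IsProbabilityMeasure μ →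
        ∀ u : X → ℝ, Measurable u → (∀ x, u x ≤ -1) →
          ∀ E M : ℝ, 1 ≤ E → 0 < M →
            (∫⁻ x, ENNReal.ofReal (-u x) ∂μ ≤ ENNReal.ofReal M) →
            (∀ t : ℝ, 2 ≤ t →
              μ {x | u x < -t} ≤ ENNReal.ofReal (E ^ α * (t - 1) ^ (-(p * α)))) →
            ∫⁻ x, ENNReal.ofReal ((-u x) ^ q) ∂μ ≤
              ENNReal.ofReal
                (C * E ^ (α * (q - 1) / (Q - 1)) * M ^ ((Q - q) / (Q - 1))) := by
  have hQ1 : (0:ℝ) < Q - 1 := by linarith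
  have hq1 : (0:ℝ) < q - 1 := by linarith
  have hβ : (0:ℝ) < p * α := by nlinarith
  obtain ⟨r, hrdef⟩ : ∃ r : ℝ, r = (2:ℝ) ^ (q - Q) := ⟨_, rfl⟩
  have hr0 : 0 < r := hrdef ▸ Real.rpow_pos_of_pos two_pos _
  have hr1 : r < 1 := hrdef ▸ Real.rpow_lt_one_of_one_lt_of_neg one_lt_two (by linarith)
  obtain ⟨C₁, hC₁def⟩ : ∃ c : ℝ, c = (2:ℝ) ^ (q + p * α) / (1 - r) := ⟨_, rfl⟩
  have hC₁ : 0 < C₁ := hC₁def ▸ div_pos (Real.rpow_pos_of_pos two_pos _) (by linarith)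
  obtain ⟨θ, hθdef⟩ : ∃ t : ℝ, t = (q - 1) / (Q - 1) := ⟨_, rfl⟩
  have hθ0 : 0 < θ := hθdef ▸ div_pos hq1 hQ1
  have hθ1 : θ < 1 := hθdef ▸ (div_lt_one hQ1).2 (by linarith)
  have h2q : (0:ℝ) < (2:ℝ) ^ q := Real.rpow_pos_of_pos two_pos q
  have h2q1 : (0:ℝ) < (2:ℝ) ^ (q - 1) := Real.rpow_pos_of_pos two_pos _
  refine ⟨(1 + C₁) + ((2:ℝ) ^ q + C₁ * (2:ℝ) ^ (q - 1)), by positivity, ?_⟩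
  intro X mX μ hμ u hu hu1 E M hE hM hint htail
  have hE0 : (0:ℝ) < E := by linarith
  have ha1 : (1:ℝ) ≤ E ^ α := Real.one_le_rpow hE (by linarith)
  have ha0 : (0:ℝ) < E ^ α := by linarith
  have hM1 : (1:ℝ) ≤ M := by
    have h0 : (1:ℝ≥0∞) ≤ ∫⁻ x, ENNReal.ofReal (-u x) ∂μ := by
      have hm : ∫⁻ _, (1:ℝ≥0∞) ∂μ ≤ ∫⁻ x, ENNReal.ofReal (-u x) ∂μ := by
        refine lintegral_mono fun x => ?_
        rw [← ENNReal.ofReal_one]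
        exact ENNReal.ofReal_le_ofReal (by have := hu1 x; linarith)
      simpa [lintegral_one] using hm
    exact ENNReal.one_le_ofReal.mp (h0.trans hint)
  have hms : ∀ T : ℝ, MeasurableSet {x | u x < -T} := fun T =>
    measurableSet_lt hu measurable_const
  have total : ∀ T : ℝ, ∫⁻ x, ENNReal.ofReal ((-u x) ^ q) ∂μ =
      (∫⁻ x in {x | u x < -T}, ENNReal.ofReal ((-u x) ^ q) ∂μ) +
      ∫⁻ x in {x | u x < -T}ᶜ, ENNReal.ofReal ((-u x) ^ q) ∂μ :=
    fun T => (lintegral_add_compl _ (hms T)).symm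
  have tail : ∀ T : ℝ, 2 ≤ T →
      ∫⁻ x in {x | u x < -T}, ENNReal.ofReal ((-u x) ^ q) ∂μ ≤
        ENNReal.ofReal (C₁ * (E ^ α * T ^ (q - Q))) := by
    intro T hT
    have h := tail6 μ u hu hu1 hq hqQ hQ.le hβ ha0.le hT hrdef htail
    refine h.trans (le_of_eq ?_)
    congr 1
    rw [hC₁def]
    ring
  -- useful rpow facts
  have hEθ : E ^ (α * (q - 1) / (Q - 1)) = (E ^ α) ^ θ := by
    rw [show α * (q - 1) / (Q - 1) = α * θ from by rw [hθdef]; ring,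
      Real.rpow_mul hE0.le]
  have hMθ : M ^ ((Q - q) / (Q - 1)) = M ^ (1 - θ) := by
    congr 1
    rw [hθdef]
    field_simp
    ring
  have haθ1 : (1:ℝ) ≤ (E ^ α) ^ θ := Real.one_le_rpow ha1 hθ0.le
  have hM1θ : (1:ℝ) ≤ M ^ (1 - θ) := Real.one_le_rpow hM1 (by linarith)
  have hZ0 : (0:ℝ) < (E ^ α) ^ θ * M ^ (1 - θ) := by positivity
  have eE : (E ^ α) ^ θ * (E ^ α) ^ (1 - θ) = E ^ α := by
    rw [← Real.rpow_add ha0, show θ + (1 - θ) = 1 from by ring, Real.rpow_one]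
  rw [hEθ, hMθ]
  by_cases hcase : 2 ≤ (E ^ α / M) ^ (1 / (Q - 1))
  · obtain ⟨T, hTdef⟩ : ∃ T : ℝ, T = (E ^ α / M) ^ (1 / (Q - 1)) := ⟨_, rfl⟩
    rw [← hTdef] at hcase
    have hT0 : (0:ℝ) < T := by linarith
    have hdiv0 : (0:ℝ) < E ^ α / M := by positivity
    have k3 : M ^ (1 - θ) = M / M ^ θ := by
      rw [Real.rpow_sub hM, Real.rpow_one]
    have hTq1 : T ^ (q - 1) * M = (E ^ α) ^ θ * M ^ (1 - θ) := by
      rw [hTdef, ← Real.rpow_mul hdiv0.le,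
        show 1 / (Q - 1) * (q - 1) = θ from by rw [hθdef]; ring,
        Real.div_rpow ha0.le hM.le, k3]
      ring
    have hTq2 : E ^ α * T ^ (q - Q) = (E ^ α) ^ θ * M ^ (1 - θ) := by
      have e2 : T ^ (q - Q) = (E ^ α) ^ (θ - 1) / M ^ (θ - 1) := by
        rw [hTdef, ← Real.rpow_mul hdiv0.le,
          show 1 / (Q - 1) * (q - Q) = θ - 1 from by rw [hθdef]; field_simp; ring,
          Real.div_rpow ha0.le hM.le]
      have k1 : E ^ α * (E ^ α) ^ (θ - 1) = (E ^ α) ^ θ := by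
        have h := Real.rpow_add ha0 1 (θ - 1)
        rw [show (1:ℝ) + (θ - 1) = θ from by ring, Real.rpow_one] at h
        exact h.symm
      rw [e2, div_eq_mul_inv, ← Real.rpow_neg hM.le,
        show -(θ - 1) = 1 - θ from by ring, ← mul_assoc, k1]
    calc ∫⁻ x, ENNReal.ofReal ((-u x) ^ q) ∂μ
        = (∫⁻ x in {x | u x < -T}, ENNReal.ofReal ((-u x) ^ q) ∂μ) +
            ∫⁻ x in {x | u x < -T}ᶜ, ENNReal.ofReal ((-u x) ^ q) ∂μ := total T
      _ ≤ ENNReal.ofReal (C₁ * (E ^ α * T ^ (q - Q))) +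
            ENNReal.ofReal (T ^ (q - 1) * M) :=
          add_le_add (tail T hcase) (bulk6 μ u hu hu1 hq hT0 hint)
      _ = ENNReal.ofReal (C₁ * (E ^ α * T ^ (q - Q)) + T ^ (q - 1) * M) := by
          rw [← ENNReal.ofReal_add (by positivity) ?_]
          have : (0:ℝ) < T ^ (q - 1) := Real.rpow_pos_of_pos hT0 _
          positivity
      _ ≤ ENNReal.ofReal ((1 + C₁ + ((2:ℝ) ^ q + C₁ * (2:ℝ) ^ (q - 1))) *
            (E ^ α) ^ θ * M ^ (1 - θ)) := by
          refine ENNReal.ofReal_le_ofReal ?_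
          rw [hTq2, hTq1]
          have hpos : (0:ℝ) < ((2:ℝ) ^ q + C₁ * (2:ℝ) ^ (q - 1)) *
              ((E ^ α) ^ θ * M ^ (1 - θ)) := by positivity
          nlinarith [hZ0, hC₁]
  · push_neg at hcase
    have haM : E ^ α ≤ 2 ^ (Q - 1) * M := by
      have h1 : ((E ^ α / M) ^ (1 / (Q - 1))) ^ (Q - 1) ≤ (2:ℝ) ^ (Q - 1) :=
        Real.rpow_le_rpow (Real.rpow_nonneg (by positivity) _) hcase.le hQ1.le
      rw [← Real.rpow_mul (by positivity),
        show 1 / (Q - 1) * (Q - 1) = 1 from by field_simp, Real.rpow_one] at h1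
      rw [div_le_iff₀ hM] at h1
      linarith
    have hA : E ^ α ≤ (E ^ α) ^ θ * ((2:ℝ) ^ (Q - 1) * M ^ (1 - θ)) := by
      have s1 : (E ^ α) ^ (1 - θ) ≤ ((2:ℝ) ^ (Q - 1) * M) ^ (1 - θ) :=
        Real.rpow_le_rpow ha0.le haM (by linarith)
      have s2 : ((2:ℝ) ^ (Q - 1) * M) ^ (1 - θ) =
          ((2:ℝ) ^ (Q - 1)) ^ (1 - θ) * M ^ (1 - θ) :=
        Real.mul_rpow (by positivity) hM.le
      have s3 : ((2:ℝ) ^ (Q - 1)) ^ (1 - θ) ≤ (2:ℝ) ^ (Q - 1) := by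
        rw [← Real.rpow_mul (by norm_num)]
        exact Real.rpow_le_rpow_of_exponent_le one_le_two (by nlinarith)
      have hm0 : (0:ℝ) ≤ M ^ (1 - θ) := (Real.rpow_pos_of_pos hM _).le
      calc E ^ α = (E ^ α) ^ θ * (E ^ α) ^ (1 - θ) := eE.symm
        _ ≤ (E ^ α) ^ θ * (((2:ℝ) ^ (Q - 1)) ^ (1 - θ) * M ^ (1 - θ)) :=
            mul_le_mul_of_nonneg_left (s1.trans_eq s2)
              (Real.rpow_nonneg ha0.le _)
        _ ≤ (E ^ α) ^ θ * ((2:ℝ) ^ (Q - 1) * M ^ (1 - θ)) :=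
            mul_le_mul_of_nonneg_left (mul_le_mul_of_nonneg_right s3 hm0)
              (Real.rpow_nonneg ha0.le _)
    have h2e : (2:ℝ) ^ (q - Q) * (2:ℝ) ^ (Q - 1) = (2:ℝ) ^ (q - 1) := by
      rw [← Real.rpow_add two_pos]
      congr 1
      ring
    calc ∫⁻ x, ENNReal.ofReal ((-u x) ^ q) ∂μ
        = (∫⁻ x in {x | u x < -2}, ENNReal.ofReal ((-u x) ^ q) ∂μ) +
            ∫⁻ x in {x | u x < -2}ᶜ, ENNReal.ofReal ((-u x) ^ q) ∂μ := total 2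
      _ ≤ ENNReal.ofReal (C₁ * (E ^ α * (2:ℝ) ^ (q - Q))) +
            ENNReal.ofReal ((2:ℝ) ^ q) :=
          add_le_add (tail 2 le_rfl) (bulk6' μ u hu hu1 (by linarith) two_pos)
      _ = ENNReal.ofReal (C₁ * (E ^ α * (2:ℝ) ^ (q - Q)) + (2:ℝ) ^ q) := by
          rw [← ENNReal.ofReal_add (by positivity) h2q.le]
      _ ≤ ENNReal.ofReal ((1 + C₁ + ((2:ℝ) ^ q + C₁ * (2:ℝ) ^ (q - 1))) *
            (E ^ α) ^ θ * M ^ (1 - θ)) := by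
          refine ENNReal.ofReal_le_ofReal ?_
          have h2qQ : (0:ℝ) < (2:ℝ) ^ (q - Q) := Real.rpow_pos_of_pos two_pos _
          have t1 : C₁ * (E ^ α * (2:ℝ) ^ (q - Q)) ≤
              C₁ * (((E ^ α) ^ θ * ((2:ℝ) ^ (Q - 1) * M ^ (1 - θ))) * (2:ℝ) ^ (q - Q)) :=
            mul_le_mul_of_nonneg_left
              (mul_le_mul_of_nonneg_right hA h2qQ.le) hC₁.le
          have t2 : (2:ℝ) ^ q ≤ (2:ℝ) ^ q * ((E ^ α) ^ θ * M ^ (1 - θ)) :=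
            le_mul_of_one_le_right h2q.le (by nlinarith)
          have e3 : C₁ * (((E ^ α) ^ θ * ((2:ℝ) ^ (Q - 1) * M ^ (1 - θ))) * (2:ℝ) ^ (q - Q))
              = C₁ * (2:ℝ) ^ (q - 1) * ((E ^ α) ^ θ * M ^ (1 - θ)) := by
            rw [← h2e]
            ring
          rw [e3] at t1
          nlinarith [hZ0, hC₁]
end
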